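/- If an idealised conformity measure A is M-optimal, then for every significance level ε ∈ (0,1), Prob_{x,τ}(|Γ_A^ε(x,τ)| > 1) · Prob_{x,τ}(|Γ_A^ε(x,τ)| = 0) = 0. -/

import Mathlib

noncomputable section Conformal

open Finset

variable {X Y : Type*} [Fintype X] [Fintype Y] [DecidableEq Y]

/-- The p-value `p_A(x,y,τ) = Q{z : A z < A (x,y)} + τ·Q{z : A z = A (x,y)}`. -/
def pValue (Q A : X × Y → ℝ) (x : X) (y : Y) (τ : ℝ) : ℝ :=
  (∑ z : X × Y, if A z < A (x, y) then Q z else 0)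
    + τ * ∑ z : X × Y, if A z = A (x, y) then Q z else 0

/-- The prediction set `Γ_A^ε(x,τ) = {y : p_A(x,y,τ) > ε}`. -/
def predSet (Q A : X × Y → ℝ) (ε : ℝ) (x : X) (τ : ℝ) : Finset Y :=
  Finset.univ.filter fun y => ε < pValue Q A x y τ

/-- The marginal `Q_X` of `Q` on the object space. -/
def margX (Q : X × Y → ℝ) (x : X) : ℝ := ∑ y, Q (x, y)

/-- The marginal `Q_Y` of `Q` on the label space. -/
def margY (Q : X × Y → ℝ) (y : Y) : ℝ := ∑ x, Q (x, y)

/-- The conditional probability `Q(y|x)`; as a function of `z = (x,y)` this is the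
CP idealised conformity measure. -/
def condQ (Q : X × Y → ℝ) (z : X × Y) : ℝ := Q z / margX Q z.1

/-- Expectation `E_{x,τ}` with `x ~ Q_X` and `τ` uniform on `[0,1]`, independent. -/
def expXT (Q : X × Y → ℝ) (g : X → ℝ → ℝ) : ℝ :=
  ∑ x, margX Q x * ∫ τ in (0:ℝ)..1, g x τ

/-- Expectation `E_{(x,y),τ}` with `(x,y) ~ Q` and `τ` uniform on `[0,1]`, independent. -/
def expZT (Q : X × Y → ℝ) (g : X × Y → ℝ → ℝ) : ℝ :=
  ∑ z, Q z * ∫ τ in (0:ℝ)..1, g z τ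

open Classical in
/-- Probability `Prob_{x,τ}` with `x ~ Q_X` and `τ` uniform on `[0,1]`, independent. -/
def probXT (Q : X × Y → ℝ) (P : X → ℝ → Prop) : ℝ :=
  expXT Q fun x τ => if P x τ then 1 else 0

open Classical in
/-- Probability `Prob_{(x,y),τ}` with `(x,y) ~ Q` and `τ` uniform on `[0,1]`, independent. -/
def probZT (Q : X × Y → ℝ) (P : X × Y → ℝ → Prop) : ℝ :=
  expZT Q fun z τ => if P z τ then 1 else 0

/-- `A` is a refinement of `B`. -/
def Refines (A B : X × Y → ℝ) : Prop :=
  ∀ z1 z2 : X × Y, B z1 < B z2 → A z1 < A z2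

/-- `max_{y' ≠ y} p_A(x,y',τ)`. -/
def maxOther (Q A : X × Y → ℝ) (x : X) (y : Y) (τ : ℝ) : ℝ :=
  ⨆ y' : {y' : Y // y' ≠ y}, pValue Q A x y'.1 τ

/-- The unconfidence `min_y max_{y' ≠ y} p_A(x,y',τ)`. -/
def unconf (Q A : X × Y → ℝ) (x : X) (τ : ℝ) : ℝ := ⨅ y : Y, maxOther Q A x y τ

/-- The credibility `max_y p_A(x,y,τ)`. -/
def maxPV (Q A : X × Y → ℝ) (x : X) (τ : ℝ) : ℝ := ⨆ y : Y, pValue Q A x y τ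

/-- The predictability `f(x) = max_y Q(y|x)`. -/
def predictability (Q : X × Y → ℝ) (x : X) : ℝ := ⨆ y : Y, condQ Q (x, y)

/-- `c` is a choice function: `Q(c x | x) = f(x)` for all `x`. -/
def IsChoiceFun (Q : X × Y → ℝ) (c : X → Y) : Prop :=
  ∀ x, condQ Q (x, c x) = predictability Q x

/-- The signed predictability (SP) idealised conformity measure corresponding to `c`. -/
def SPMeasure (Q : X × Y → ℝ) (c : X → Y) : X × Y → ℝ := fun z =>
  if z.2 = c z.1 then predictability Q z.1 else -predictability Q z.1

/-- The modified conditional probability (MCP) idealised conformity measure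
corresponding to `c`. -/
def MCPMeasure (Q : X × Y → ℝ) (c : X → Y) : X × Y → ℝ := fun z =>
  if z.2 = c z.1 then condQ Q z else condQ Q z - 1

/-- The modified signed predictability (MSP) idealised conformity measure
(independent of the choice function: `y = ŷ(x)` iff `Q(y|x) = f(x)` when `f(x) > 1/2`). -/
def MSPMeasure (Q : X × Y → ℝ) : X × Y → ℝ := fun z =>
  if 1 / 2 < predictability Q z.1 then
    if condQ Q z = predictability Q z.1 then predictability Q z.1
    else -predictability Q z.1
  else 0

/-- S-optimality. -/
def SOpt (Q A : X × Y → ℝ) : Prop :=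
  ∀ B : X × Y → ℝ,
    expXT Q (fun x τ => ∑ y, pValue Q A x y τ)
      ≤ expXT Q (fun x τ => ∑ y, pValue Q B x y τ)

/-- N-optimality. -/
def NOpt (Q A : X × Y → ℝ) : Prop :=
  ∀ B : X × Y → ℝ, ∀ ε ∈ Set.Ioo (0:ℝ) 1,
    expXT Q (fun x τ => ((predSet Q A ε x τ).card : ℝ))
      ≤ expXT Q (fun x τ => ((predSet Q B ε x τ).card : ℝ))

/-- OF-optimality. -/
def OFOpt (Q A : X × Y → ℝ) : Prop :=
  ∀ B : X × Y → ℝ,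
    expZT Q (fun z τ => ∑ y' ∈ Finset.univ.erase z.2, pValue Q A z.1 y' τ)
      ≤ expZT Q (fun z τ => ∑ y' ∈ Finset.univ.erase z.2, pValue Q B z.1 y' τ)

/-- OE-optimality. -/
def OEOpt (Q A : X × Y → ℝ) : Prop :=
  ∀ B : X × Y → ℝ, ∀ ε ∈ Set.Ioo (0:ℝ) 1,
    expZT Q (fun z τ => (((predSet Q A ε z.1 τ).erase z.2).card : ℝ))
      ≤ expZT Q (fun z τ => (((predSet Q B ε z.1 τ).erase z.2).card : ℝ))

/-- U-optimality. -/
def UOpt (Q A : X × Y → ℝ) : Prop :=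
  ∀ B : X × Y → ℝ,
    expXT Q (unconf Q A) < expXT Q (unconf Q B) ∨
      (expXT Q (unconf Q A) = expXT Q (unconf Q B) ∧
        expXT Q (maxPV Q A) ≤ expXT Q (maxPV Q B))

/-- M-optimality. -/
def MOpt (Q A : X × Y → ℝ) : Prop :=
  ∀ B : X × Y → ℝ, ∀ ε ∈ Set.Ioo (0:ℝ) 1,
    probXT Q (fun x τ => 1 < (predSet Q A ε x τ).card)
        < probXT Q (fun x τ => 1 < (predSet Q B ε x τ).card) ∨
      (probXT Q (fun x τ => 1 < (predSet Q A ε x τ).card)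
          = probXT Q (fun x τ => 1 < (predSet Q B ε x τ).card) ∧
        probXT Q (fun x τ => (predSet Q B ε x τ).card = 0)
          ≤ probXT Q (fun x τ => (predSet Q A ε x τ).card = 0))

/-- F-optimality. -/
def FOpt (Q A : X × Y → ℝ) : Prop :=
  ∀ B : X × Y → ℝ,
    expXT Q (fun x τ => (∑ y, pValue Q A x y τ) - maxPV Q A x τ)
        < expXT Q (fun x τ => (∑ y, pValue Q B x y τ) - maxPV Q B x τ) ∨
      (expXT Q (fun x τ => (∑ y, pValue Q A x y τ) - maxPV Q A x τ)
          = expXT Q (fun x τ => (∑ y, pValue Q B x y τ) - maxPV Q B x τ) ∧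
        expXT Q (maxPV Q A) ≤ expXT Q (maxPV Q B))

/-- E-optimality. -/
def EOpt (Q A : X × Y → ℝ) : Prop :=
  ∀ B : X × Y → ℝ, ∀ ε ∈ Set.Ioo (0:ℝ) 1,
    expXT Q (fun x τ => max (((predSet Q A ε x τ).card : ℝ) - 1) 0)
        < expXT Q (fun x τ => max (((predSet Q B ε x τ).card : ℝ) - 1) 0) ∨
      (expXT Q (fun x τ => max (((predSet Q A ε x τ).card : ℝ) - 1) 0)
          = expXT Q (fun x τ => max (((predSet Q B ε x τ).card : ℝ) - 1) 0) ∧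
        probXT Q (fun x τ => (predSet Q B ε x τ).card = 0)
          ≤ probXT Q (fun x τ => (predSet Q A ε x τ).card = 0))

/-- OU-optimality. -/
def OUOpt (Q A : X × Y → ℝ) : Prop :=
  ∀ B : X × Y → ℝ,
    expZT Q (fun z τ => maxOther Q A z.1 z.2 τ)
      ≤ expZT Q (fun z τ => maxOther Q B z.1 z.2 τ)

/-- OM-optimality. -/
def OMOpt (Q A : X × Y → ℝ) : Prop :=
  ∀ B : X × Y → ℝ, ∀ ε ∈ Set.Ioo (0:ℝ) 1,
    probZT Q (fun z τ => ((predSet Q A ε z.1 τ).erase z.2).Nonempty)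
      ≤ probZT Q (fun z τ => ((predSet Q B ε z.1 τ).erase z.2).Nonempty)

end Conformal
open MeasureTheory intervalIntegral

noncomputable def clamp (r : ℝ) : ℝ := max (min 1 r) 0

lemma clamp_nonneg (r : ℝ) : 0 ≤ clamp r := le_max_right _ _
lemma clamp_le_one (r : ℝ) : clamp r ≤ 1 := max_le (min_le_left _ _) zero_le_one
lemma clamp_of_one_le {r : ℝ} (h : 1 ≤ r) : clamp r = 1 := by
  rw [clamp, min_eq_left h]; exact max_eq_left zero_le_one
lemma clamp_of_nonpos {r : ℝ} (h : r ≤ 0) : clamp r = 0 := by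
  rw [clamp, max_eq_right]; exact (min_le_right _ _).trans h

lemma step_eq_indicator (r : ℝ) :
    (fun τ : ℝ => if τ ≤ r then (1:ℝ) else 0) = Set.indicator (Set.Iic r) (fun _ => (1:ℝ)) := by
  funext τ; simp [Set.indicator, Set.mem_Iic]

lemma intInt_step (r : ℝ) : IntervalIntegrable (fun τ : ℝ => if τ ≤ r then (1:ℝ) else 0) volume 0 1 := by
  rw [step_eq_indicator, intervalIntegrable_iff_integrableOn_Ioc_of_le (by norm_num : (0:ℝ) ≤ 1)]
  exact (integrableOn_const (by simp) (by simp)).indicator measurableSet_Iic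

lemma integral_step (r : ℝ) : ∫ τ in (0:ℝ)..1, (if τ ≤ r then (1:ℝ) else 0) = clamp r := by
  rw [step_eq_indicator, integral_of_le (by norm_num : (0:ℝ) ≤ 1),
    MeasureTheory.setIntegral_indicator measurableSet_Iic, MeasureTheory.setIntegral_const]
  have h : Set.Ioc (0:ℝ) 1 ∩ Set.Iic r = Set.Ioc 0 (min 1 r) := by
    ext x; simp only [Set.mem_inter_iff, Set.mem_Ioc, Set.mem_Iic, le_min_iff]; tauto
  rw [h, Real.volume_real_Ioc, smul_eq_mul, mul_one, clamp, sub_zero]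

lemma affstep_eq {L q ε : ℝ} (hq : 0 < q) :
    (fun τ : ℝ => if L + τ * q ≤ ε then (1:ℝ) else 0)
      = (fun τ : ℝ => if τ ≤ (ε - L)/q then (1:ℝ) else 0) := by
  funext τ
  have : L + τ * q ≤ ε ↔ τ ≤ (ε - L)/q := by
    rw [le_div_iff₀ hq]; constructor <;> intro h <;> linarith
  exact if_congr this rfl rfl

lemma affstep_eq_zero {L q ε : ℝ} (hq : q = 0) :
    (fun τ : ℝ => if L + τ * q ≤ ε then (1:ℝ) else 0)
      = (fun _ : ℝ => if L ≤ ε then (1:ℝ) else 0) := by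
  subst hq; funext τ; simp

lemma intInt_affstep {L q ε : ℝ} (hq : 0 ≤ q) :
    IntervalIntegrable (fun τ : ℝ => if L + τ * q ≤ ε then (1:ℝ) else 0) volume 0 1 := by
  rcases hq.lt_or_eq with h | h
  · rw [affstep_eq h]; exact intInt_step _
  · rw [affstep_eq_zero h.symm]
    by_cases hL : L ≤ ε <;> simp [hL, _root_.intervalIntegrable_const]

lemma integral_affstep_pos {L q ε : ℝ} (hq : 0 < q) :
    ∫ τ in (0:ℝ)..1, (if L + τ * q ≤ ε then (1:ℝ) else 0) = clamp ((ε - L)/q) := by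
  rw [affstep_eq hq, integral_step]

lemma integral_affstep_zero {L ε : ℝ} :
    ∫ τ in (0:ℝ)..1, (if L + τ * 0 ≤ ε then (1:ℝ) else 0) = if L ≤ ε then 1 else 0 := by
  rw [affstep_eq_zero rfl]
  by_cases hL : L ≤ ε <;> simp [hL]


noncomputable section Aux
open Finset MeasureTheory intervalIntegral
set_option linter.unusedSectionVars false
variable {X Y : Type*} [Fintype X] [Fintype Y] [DecidableEq Y]

def Lo (Q C : X × Y → ℝ) (z0 : X × Y) : ℝ := ∑ z, if C z < C z0 then Q z else 0
def Wt (Q C : X × Y → ℝ) (z0 : X × Y) : ℝ := ∑ z, if C z = C z0 then Q z else 0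

lemma pValue_eq (Q C : X × Y → ℝ) (x : X) (y : Y) (τ : ℝ) :
    pValue Q C x y τ = Lo Q C (x,y) + τ * Wt Q C (x,y) := rfl

section basic
variable {Q : X × Y → ℝ} (hQ0 : ∀ z, 0 ≤ Q z)

lemma sum_ite_nonneg (hQ0 : ∀ z, 0 ≤ Q z) (p : X × Y → Prop) [DecidablePred p] :
    0 ≤ ∑ z, if p z then Q z else 0 :=
  Finset.sum_nonneg fun z _ => by by_cases h : p z <;> simp [h, hQ0 z]

lemma Lo_nonneg (hQ0 : ∀ z, 0 ≤ Q z) (C : X × Y → ℝ) (z0 : X × Y) : 0 ≤ Lo Q C z0 :=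
  sum_ite_nonneg hQ0 _
lemma Wt_nonneg (hQ0 : ∀ z, 0 ≤ Q z) (C : X × Y → ℝ) (z0 : X × Y) : 0 ≤ Wt Q C z0 :=
  sum_ite_nonneg hQ0 _

lemma sum_ite_le_one (hQ0 : ∀ z, 0 ≤ Q z) (hQ1 : ∑ z : X × Y, Q z = 1)
    (p : X × Y → Prop) [DecidablePred p] : (∑ z, if p z then Q z else 0) ≤ 1 := by
  rw [← hQ1]
  exact Finset.sum_le_sum fun z _ => by by_cases h : p z <;> simp [h, hQ0 z]

lemma Lo_add_Wt (Q C : X × Y → ℝ) (z0 : X × Y) :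
    Lo Q C z0 + Wt Q C z0 = ∑ z, if C z ≤ C z0 then Q z else 0 := by
  rw [Lo, Wt, ← Finset.sum_add_distrib]
  refine Finset.sum_congr rfl fun z _ => ?_
  rcases lt_trichotomy (C z) (C z0) with h | h | h
  · simp [h, h.le, h.ne]
  · simp [h, le_of_eq h]
  · simp [not_lt_of_gt h, h.ne', not_le_of_gt h]

lemma Lo_mono (hQ0 : ∀ z, 0 ≤ Q z) {C : X × Y → ℝ} {z z' : X × Y} (h : C z ≤ C z') :
    Lo Q C z ≤ Lo Q C z' := by
  refine Finset.sum_le_sum fun u _ => ?_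
  by_cases hu : C u < C z
  · simp [hu, hu.trans_le h, le_refl]
  · by_cases hu' : C u < C z' <;> simp [hu, hu', hQ0 u]

lemma Lo_Wt_chain (hQ0 : ∀ z, 0 ≤ Q z) {C : X × Y → ℝ} {z z' : X × Y} (h : C z < C z') :
    Lo Q C z + Wt Q C z ≤ Lo Q C z' := by
  rw [Lo_add_Wt]
  refine Finset.sum_le_sum fun u _ => ?_
  by_cases hu : C u ≤ C z
  · simp [hu, hu.trans_lt h, le_refl]
  · by_cases hu' : C u < C z' <;> simp [hu, hu', hQ0 u]

lemma Lo_Wt_eq {Q C : X × Y → ℝ} {z z' : X × Y} (h : C z = C z') :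
    Lo Q C z = Lo Q C z' ∧ Wt Q C z = Wt Q C z' := by
  constructor <;>
  · refine Finset.sum_congr rfl fun u _ => ?_
    rw [h]

lemma pValue_mono (hQ0 : ∀ z, 0 ≤ Q z) {C : X × Y → ℝ} {z z' : X × Y} (h : C z ≤ C z')
    {τ : ℝ} (h0 : 0 ≤ τ) (h1 : τ ≤ 1) :
    pValue Q C z.1 z.2 τ ≤ pValue Q C z'.1 z'.2 τ := by
  rw [pValue_eq, pValue_eq]
  have hz : ((z.1, z.2) : X × Y) = z := rfl
  have hz' : ((z'.1, z'.2) : X × Y) = z' := rfl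
  rw [hz, hz']
  rcases h.lt_or_eq with hlt | heq
  · have h2 : Lo Q C z + Wt Q C z ≤ Lo Q C z' := Lo_Wt_chain hQ0 hlt
    have h3 : Lo Q C z ≤ Lo Q C z' := Lo_mono hQ0 h
    nlinarith [Wt_nonneg hQ0 C z', Wt_nonneg hQ0 C z]
  · obtain ⟨e1, e2⟩ := Lo_Wt_eq (Q := Q) heq
    rw [e1, e2]

/-- `TT` = measure of `τ ∈ [0,1]` where the p-value of `z` is `≤ ε`. -/
def TT (Q C : X × Y → ℝ) (ε : ℝ) (z : X × Y) : ℝ :=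
  ∫ τ in (0:ℝ)..1, if pValue Q C z.1 z.2 τ ≤ ε then (1:ℝ) else 0

lemma TT_integrand_eq (Q C : X × Y → ℝ) (ε : ℝ) (z : X × Y) :
    (fun τ => if pValue Q C z.1 z.2 τ ≤ ε then (1:ℝ) else 0)
      = (fun τ => if Lo Q C z + τ * Wt Q C z ≤ ε then (1:ℝ) else 0) := by
  funext τ; rw [pValue_eq]

lemma TT_intInt (hQ0 : ∀ z, 0 ≤ Q z) (C : X × Y → ℝ) (ε : ℝ) (z : X × Y) :
    IntervalIntegrable (fun τ => if pValue Q C z.1 z.2 τ ≤ ε then (1:ℝ) else 0) volume 0 1 := by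
  rw [TT_integrand_eq]; exact intInt_affstep (Wt_nonneg hQ0 C z)

lemma TT_nonneg (Q C : X × Y → ℝ) (ε : ℝ) (z : X × Y) : 0 ≤ TT Q C ε z := by
  refine intervalIntegral.integral_nonneg (by norm_num) fun τ _ => ?_
  by_cases h : pValue Q C z.1 z.2 τ ≤ ε <;> simp [h]

lemma TT_le_one (hQ0 : ∀ z, 0 ≤ Q z) (C : X × Y → ℝ) (ε : ℝ) (z : X × Y) : TT Q C ε z ≤ 1 := by
  have := intervalIntegral.integral_mono_on (by norm_num : (0:ℝ) ≤ 1) (TT_intInt hQ0 C ε z)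
    (_root_.intervalIntegrable_const (c := (1:ℝ))) (fun τ _ => by
      by_cases h : pValue Q C z.1 z.2 τ ≤ ε <;> simp [h])
  simpa [TT] using this

lemma TT_anti (hQ0 : ∀ z, 0 ≤ Q z) {C : X × Y → ℝ} {ε : ℝ} {z z' : X × Y} (h : C z ≤ C z') :
    TT Q C ε z' ≤ TT Q C ε z := by
  refine intervalIntegral.integral_mono_on (by norm_num : (0:ℝ) ≤ 1)
    (TT_intInt hQ0 C ε z') (TT_intInt hQ0 C ε z) (fun τ hτ => ?_)
  have hp : pValue Q C z.1 z.2 τ ≤ pValue Q C z'.1 z'.2 τ := pValue_mono hQ0 h hτ.1 hτ.2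
  by_cases h' : pValue Q C z'.1 z'.2 τ ≤ ε
  · simp [hp.trans h', h']
  · by_cases h'' : pValue Q C z.1 z.2 τ ≤ ε <;> simp [h', h'']

lemma TT_closed_pos {Q C : X × Y → ℝ} {ε : ℝ} {z : X × Y} (h : 0 < Wt Q C z) :
    TT Q C ε z = clamp ((ε - Lo Q C z) / Wt Q C z) := by
  rw [TT, TT_integrand_eq, integral_affstep_pos h]

lemma TT_closed_zero {Q C : X × Y → ℝ} {ε : ℝ} {z : X × Y} (h : Wt Q C z = 0) :
    TT Q C ε z = if Lo Q C z ≤ ε then 1 else 0 := by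
  rw [TT, TT_integrand_eq, h, integral_affstep_zero]

end basic

section charac
variable {Q : X × Y → ℝ} {C : X × Y → ℝ} {ε : ℝ}

lemma card_zero_iff (hQ0 : ∀ z, 0 ≤ Q z) {x : X} {top : Y}
    (htop : ∀ y, C (x,y) ≤ C (x,top)) {τ : ℝ} (h0 : 0 ≤ τ) (h1 : τ ≤ 1) :
    (predSet Q C ε x τ).card = 0 ↔ pValue Q C x top τ ≤ ε := by
  rw [Finset.card_eq_zero, predSet, Finset.filter_eq_empty_iff]
  constructor
  · intro h
    have := h (Finset.mem_univ top); exact not_lt.1 this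
  · intro h y _
    have hm : pValue Q C x y τ ≤ pValue Q C x top τ :=
      pValue_mono hQ0 (z := (x,y)) (z' := (x,top)) (htop y) h0 h1
    exact not_lt.2 (hm.trans h)

lemma one_lt_card_iff (hQ0 : ∀ z, 0 ≤ Q z) {x : X} {top sec : Y} (hne : sec ≠ top)
    (htop : ∀ y, C (x,y) ≤ C (x,top)) (hsec : ∀ y, y ≠ top → C (x,y) ≤ C (x,sec))
    {τ : ℝ} (h0 : 0 ≤ τ) (h1 : τ ≤ 1) :
    1 < (predSet Q C ε x τ).card ↔ ε < pValue Q C x sec τ := by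
  constructor
  · intro h
    obtain ⟨y, hy, hyne⟩ : ∃ y ∈ predSet Q C ε x τ, y ≠ top := by
      by_contra hcon
      push_neg at hcon
      have hsub : predSet Q C ε x τ ⊆ {top} := fun y hy => Finset.mem_singleton.2 (hcon y hy)
      have := Finset.card_le_card hsub
      simp at this; omega
    have hy' : ε < pValue Q C x y τ := (Finset.mem_filter.1 hy).2
    have hm : pValue Q C x y τ ≤ pValue Q C x sec τ :=
      pValue_mono hQ0 (z := (x,y)) (z' := (x,sec)) (hsec y hyne) h0 h1
    exact hy'.trans_le hm
  · intro h
    have hsec_mem : sec ∈ predSet Q C ε x τ := Finset.mem_filter.2 ⟨Finset.mem_univ _, h⟩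
    have htop_mem : top ∈ predSet Q C ε x τ := by
      refine Finset.mem_filter.2 ⟨Finset.mem_univ _, ?_⟩
      exact h.trans_le (pValue_mono hQ0 (z := (x,sec)) (z' := (x,top)) (htop sec) h0 h1)
    have hsub : ({sec, top} : Finset Y) ⊆ predSet Q C ε x τ := by
      intro y hy
      rcases Finset.mem_insert.1 hy with rfl | hy
      · exact hsec_mem
      · rw [Finset.mem_singleton.1 hy]; exact htop_mem
    calc 1 < ({sec, top} : Finset Y).card := by rw [Finset.card_insert_of_notMem (by simpa using hne)]; simp
    _ ≤ _ := Finset.card_le_card hsub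

lemma probXT_empty_eq (hQ0 : ∀ z, 0 ≤ Q z) (tops : X → Y)
    (htop : ∀ x y, C (x,y) ≤ C (x, tops x)) :
    probXT Q (fun x τ => (predSet Q C ε x τ).card = 0)
      = ∑ x, margX Q x * TT Q C ε (x, tops x) := by
  rw [probXT, expXT]
  refine Finset.sum_congr rfl fun x _ => ?_
  congr 1
  rw [TT]
  refine intervalIntegral.integral_congr fun τ hτ => ?_
  rw [Set.uIcc_of_le (by norm_num : (0:ℝ) ≤ 1)] at hτ
  by_cases h : pValue Q C x (tops x) τ ≤ ε
  · rw [if_pos ((card_zero_iff hQ0 (htop x) hτ.1 hτ.2).2 h), if_pos h]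
  · rw [if_neg (fun hc => h ((card_zero_iff hQ0 (htop x) hτ.1 hτ.2).1 hc)), if_neg h]

lemma probXT_mult_eq (hQ0 : ∀ z, 0 ≤ Q z) (tops secs : X → Y)
    (hne : ∀ x, secs x ≠ tops x)
    (htop : ∀ x y, C (x,y) ≤ C (x, tops x))
    (hsec : ∀ x y, y ≠ tops x → C (x,y) ≤ C (x, secs x)) :
    probXT Q (fun x τ => 1 < (predSet Q C ε x τ).card)
      = ∑ x, margX Q x * (1 - TT Q C ε (x, secs x)) := by
  rw [probXT, expXT]
  refine Finset.sum_congr rfl fun x _ => ?_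
  congr 1
  have h2 : (1:ℝ) - TT Q C ε (x, secs x)
      = ∫ τ in (0:ℝ)..1, ((1:ℝ) - if pValue Q C x (secs x) τ ≤ ε then (1:ℝ) else 0) := by
    rw [TT, intervalIntegral.integral_sub (_root_.intervalIntegrable_const (c := (1:ℝ)))
      (TT_intInt hQ0 C ε (x, secs x))]
    simp
  rw [h2]
  refine intervalIntegral.integral_congr fun τ hτ => ?_
  rw [Set.uIcc_of_le (by norm_num : (0:ℝ) ≤ 1)] at hτ
  have hiff := one_lt_card_iff (ε := ε) hQ0 (hne x) (htop x) (hsec x) hτ.1 hτ.2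
  by_cases h : pValue Q C x (secs x) τ ≤ ε
  · rw [if_neg (fun hc => (not_lt.2 h) (hiff.1 hc)), if_pos h]; norm_num
  · rw [if_pos (hiff.2 (lt_of_not_ge h)), if_neg h]; norm_num

end charac

section validity
variable {Q : X × Y → ℝ}

lemma clamp_mul {m c ε : ℝ} (hm : 0 < m) :
    m * clamp ((ε - c) / m) = max 0 (min (ε - c) m) := by
  rcases le_or_gt (ε - c) 0 with h | h
  · have hd : (ε - c) / m ≤ 0 := by
      rw [div_nonpos_iff]
      exact Or.inr ⟨h, hm.le⟩
    rw [clamp_of_nonpos hd, mul_zero, max_eq_left (min_le_of_left_le h)]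
  · rcases le_or_gt m (ε - c) with h2 | h2
    · rw [clamp_of_one_le ((one_le_div hm).2 h2), mul_one, min_eq_right h2,
        max_eq_right hm.le]
    · have hc : clamp ((ε - c)/m) = (ε - c)/m := by
        rw [clamp, min_eq_right ((div_le_one hm).2 h2.le), max_eq_left (div_pos h hm).le]
      rw [hc, mul_div_cancel₀ _ hm.ne', min_eq_left h2.le, max_eq_right h.le]

lemma min_sub_min {m c ε : ℝ} (hm : 0 ≤ m) :
    min ε (c + m) - min ε c = max 0 (min (ε - c) m) := by
  rcases le_or_gt ε c with h | h
  · rw [min_eq_left h, min_eq_left (h.trans (by linarith)), sub_self, max_eq_left]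
    exact min_le_of_left_le (by linarith)
  · rw [min_eq_right h.le, max_eq_right]
    · rcases le_or_gt ε (c + m) with h2 | h2
      · rw [min_eq_left h2, min_eq_left (by linarith)]
      · rw [min_eq_right h2.le, min_eq_right (by linarith)]; ring
    · rcases le_total (ε - c) m with h3 | h3
      · rw [min_eq_left h3]; linarith
      · rw [min_eq_right h3]; linarith

def cumLt (Q C : X × Y → ℝ) (v : ℝ) : ℝ := ∑ z, if C z < v then Q z else 0
def cumLe (Q C : X × Y → ℝ) (v : ℝ) : ℝ := ∑ z, if C z ≤ v then Q z else 0

lemma cum_chain (hQ0 : ∀ z, 0 ≤ Q z) (C : X × Y → ℝ) {v v' : ℝ} (h : v < v') :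
    cumLe Q C v ≤ cumLt Q C v' := by
  refine Finset.sum_le_sum fun u _ => ?_
  by_cases hu : C u ≤ v
  · simp [hu, hu.trans_lt h, le_refl]
  · by_cases hu' : C u < v' <;> simp [hu, hu', hQ0 u]

lemma cumLt_le_cumLe (hQ0 : ∀ z, 0 ≤ Q z) (C : X × Y → ℝ) (v : ℝ) :
    cumLt Q C v ≤ cumLe Q C v := by
  refine Finset.sum_le_sum fun u _ => ?_
  by_cases hu : C u < v
  · simp [hu, hu.le, le_refl]
  · by_cases hu' : C u ≤ v <;> simp [hu, hu', hQ0 u]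

lemma tele_bound {ε : ℝ} (hε : 0 < ε) (cLt cLe : ℝ → ℝ)
    (h0 : ∀ v, 0 ≤ cLt v) (hle : ∀ v, cLt v ≤ cLe v)
    (hchain : ∀ v v', v < v' → cLe v ≤ cLt v') :
    ∀ (V : Finset ℝ), ∀ c : ℝ, 0 ≤ c → (∀ v ∈ V, cLe v ≤ c) →
      ∑ v ∈ V, (min ε (cLe v) - min ε (cLt v)) ≤ min ε c := by
  intro V
  induction V using Finset.induction_on_max with
  | empty => intro c hc _; simp [le_min hε.le hc]
  | insert a s ha ih =>
    intro c hc hbd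
    have hnotmem : a ∉ s := fun hmem => lt_irrefl a (ha a hmem)
    rw [Finset.sum_insert hnotmem]
    have h1 : ∑ v ∈ s, (min ε (cLe v) - min ε (cLt v)) ≤ min ε (cLt a) :=
      ih (cLt a) (h0 a) (fun v hv => hchain v a (ha v hv))
    have h2 : min ε (cLe a) ≤ min ε c :=
      min_le_min le_rfl (hbd a (Finset.mem_insert_self a s))
    linarith

lemma validity_le (hQ0 : ∀ z, 0 ≤ Q z) (hQ1 : ∑ z : X × Y, Q z = 1)
    (C : X × Y → ℝ) {ε : ℝ} (hε : 0 < ε) (hε1 : ε ≤ 1) :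
    ∑ z, Q z * TT Q C ε z ≤ ε := by
  classical
  have hfib : ∑ z, Q z * TT Q C ε z
      = ∑ v ∈ Finset.univ.image C, ∑ z ∈ Finset.univ.filter (fun z => C z = v),
          Q z * TT Q C ε z := by
    rw [Finset.sum_fiberwise_of_maps_to (fun z _ => Finset.mem_image_of_mem C (Finset.mem_univ z))]
  rw [hfib]
  have key : ∀ v, ∑ z ∈ Finset.univ.filter (fun z => C z = v), Q z * TT Q C ε z
      ≤ min ε (cumLe Q C v) - min ε (cumLt Q C v) := by
    intro v
    set m : ℝ := cumLe Q C v - cumLt Q C v with hm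
    have hmass : ∑ z ∈ Finset.univ.filter (fun z => C z = v), Q z = m := by
      rw [hm, cumLe, cumLt, Finset.sum_filter, ← Finset.sum_sub_distrib]
      refine Finset.sum_congr rfl fun z _ => ?_
      rcases lt_trichotomy (C z) v with h | h | h
      · simp [h, h.le, h.ne]
      · simp [h, le_of_eq h]
      · simp [not_lt_of_gt h, h.ne', not_le_of_gt h]
    have hLo : ∀ z ∈ Finset.univ.filter (fun z => C z = v), Lo Q C z = cumLt Q C v := by
      intro z hz
      have hv : C z = v := (Finset.mem_filter.1 hz).2
      rw [Lo, cumLt]; exact Finset.sum_congr rfl fun u _ => by rw [hv]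
    have hWt : ∀ z ∈ Finset.univ.filter (fun z => C z = v), Wt Q C z = m := by
      intro z hz
      have hv : C z = v := (Finset.mem_filter.1 hz).2
      rw [← hmass, Wt, Finset.sum_filter]
      exact Finset.sum_congr rfl fun u _ => by rw [hv]
    have hm0 : 0 ≤ m := by
      rw [← hmass]; exact Finset.sum_nonneg fun z _ => hQ0 z
    have hrw : min ε (cumLe Q C v) - min ε (cumLt Q C v) = max 0 (min (ε - cumLt Q C v) m) := by
      rw [show cumLe Q C v = cumLt Q C v + m by rw [hm]; ring]
      exact min_sub_min hm0
    rw [hrw]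
    rcases hm0.lt_or_eq with hpos | hzero
    · have hTT : ∀ z ∈ Finset.univ.filter (fun z => C z = v),
          Q z * TT Q C ε z = Q z * clamp ((ε - cumLt Q C v) / m) := by
        intro z hz
        rw [TT_closed_pos (by rw [hWt z hz]; exact hpos), hLo z hz, hWt z hz]
      rw [Finset.sum_congr rfl hTT, ← Finset.sum_mul, hmass, clamp_mul hpos]
    · have : ∀ z ∈ Finset.univ.filter (fun z => C z = v), Q z * TT Q C ε z = 0 := by
        intro z hz
        have := (Finset.sum_eq_zero_iff_of_nonneg (fun z _ => hQ0 z)).1 (hmass.trans hzero.symm) z hz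
        rw [this, zero_mul]
      rw [Finset.sum_eq_zero this]
      exact le_max_left _ _
  calc ∑ v ∈ Finset.univ.image C, ∑ z ∈ Finset.univ.filter (fun z => C z = v), Q z * TT Q C ε z
      ≤ ∑ v ∈ Finset.univ.image C, (min ε (cumLe Q C v) - min ε (cumLt Q C v)) :=
        Finset.sum_le_sum fun v _ => key v
    _ ≤ min ε 1 := by
        refine tele_bound hε (cumLt Q C) (cumLe Q C) (fun v => sum_ite_nonneg hQ0 _)
          (fun v => cumLt_le_cumLe hQ0 C v) (fun v v' h => cum_chain hQ0 C h) _ 1 zero_le_one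
          (fun v _ => sum_ite_le_one hQ0 hQ1 _)
    _ = ε := min_eq_left hε1

end validity

section keyA
variable {Q : X × Y → ℝ}

/-- The key consequence of validity: total budget spent on second-best and best labels. -/
lemma keyA (hQ0 : ∀ z, 0 ≤ Q z) (hQ1 : ∑ z : X × Y, Q z = 1)
    (C : X × Y → ℝ) {ε : ℝ} (hε : 0 < ε) (hε1 : ε ≤ 1)
    (tops secs : X → Y)
    (htop : ∀ x y, C (x,y) ≤ C (x, tops x))
    (hsec : ∀ x y, y ≠ tops x → C (x,y) ≤ C (x, secs x))
    (c : X → Y) (hc : ∀ x y, Q (x,y) ≤ Q (x, c x)) :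
    ∑ x, ((margX Q x - Q (x, c x)) * TT Q C ε (x, secs x)
        + Q (x, c x) * TT Q C ε (x, tops x)) ≤ ε := by
  have hstep : ∀ x, (margX Q x - Q (x, c x)) * TT Q C ε (x, secs x)
      + Q (x, c x) * TT Q C ε (x, tops x) ≤ ∑ y, Q (x,y) * TT Q C ε (x,y) := by
    intro x
    have hts : TT Q C ε (x, tops x) ≤ TT Q C ε (x, secs x) :=
      TT_anti hQ0 (htop x (secs x))
    have h1 : ∑ y, Q (x,y) * TT Q C ε (x,y)
        = Q (x, tops x) * TT Q C ε (x, tops x)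
          + ∑ y ∈ Finset.univ.erase (tops x), Q (x,y) * TT Q C ε (x,y) :=
      (Finset.add_sum_erase _ (fun y => Q (x,y) * TT Q C ε (x,y))
        (Finset.mem_univ (tops x))).symm
    have h2 : ∑ y ∈ Finset.univ.erase (tops x), Q (x,y) * TT Q C ε (x,y)
        ≥ ∑ y ∈ Finset.univ.erase (tops x), Q (x,y) * TT Q C ε (x, secs x) := by
      refine Finset.sum_le_sum fun y hy => ?_
      exact mul_le_mul_of_nonneg_left
        (TT_anti hQ0 (hsec x y (Finset.ne_of_mem_erase hy))) (hQ0 (x,y))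
    have h3 : ∑ y ∈ Finset.univ.erase (tops x), Q (x,y) * TT Q C ε (x, secs x)
        = (margX Q x - Q (x, tops x)) * TT Q C ε (x, secs x) := by
      rw [← Finset.sum_mul]
      congr 1
      have := (Finset.add_sum_erase _ (fun y => Q (x,y)) (Finset.mem_univ (tops x))).symm
      rw [margX]; linarith
    have h4 : 0 ≤ (Q (x, c x) - Q (x, tops x)) * (TT Q C ε (x, secs x) - TT Q C ε (x, tops x)) :=
      mul_nonneg (by linarith [hc x (tops x)]) (by linarith)
    nlinarith [h1, h2, h3]
  calc ∑ x, ((margX Q x - Q (x, c x)) * TT Q C ε (x, secs x)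
        + Q (x, c x) * TT Q C ε (x, tops x))
      ≤ ∑ x, ∑ y, Q (x,y) * TT Q C ε (x,y) := Finset.sum_le_sum fun x _ => hstep x
    _ = ∑ z : X × Y, Q z * TT Q C ε z :=
        (Fintype.sum_prod_type (f := fun z : X × Y => Q z * TT Q C ε z)).symm
    _ ≤ ε := validity_le hQ0 hQ1 C hε hε1

end keyA

section Bblock
variable {Q : X × Y → ℝ}

/-- The block measure: chosen labels on top, non-chosen labels stratified by `lvl`. -/
def Bm (c : X → Y) (lvl : X → ℝ) : X × Y → ℝ := fun z => if z.2 = c z.1 then 3 else lvl z.1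

lemma Bm_top (c : X → Y) (lvl : X → ℝ) (hlvl3 : ∀ x, lvl x < 3) (x : X) (y : Y) :
    Bm c lvl (x,y) ≤ Bm c lvl (x, c x) := by
  by_cases h : y = c x <;> simp [Bm, h, (hlvl3 x).le]

lemma Bm_sec (c : X → Y) (lvl : X → ℝ) {x : X} {y y' : Y} (h : y ≠ c x) (h' : y' ≠ c x) :
    Bm c lvl (x,y) = Bm c lvl (x,y') := by
  simp only [Bm, if_neg h, if_neg h']

lemma sum_nonchosen (Q : X × Y → ℝ) (c : X → Y) (x' : X) :
    (∑ y', if y' ≠ c x' then Q (x',y') else 0) = margX Q x' - Q (x', c x') := by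
  have h1 : (∑ y', if y' ≠ c x' then Q (x',y') else 0)
      = ∑ y', (Q (x',y') - if y' = c x' then Q (x',y') else 0) := by
    refine Finset.sum_congr rfl fun y' _ => ?_
    by_cases h : y' = c x' <;> simp [h]
  rw [h1, Finset.sum_sub_distrib, Finset.sum_ite_eq' Finset.univ (c x') (fun y' => Q (x',y'))]
  simp [margX]

lemma Bm_Lo (c : X → Y) (lvl : X → ℝ) (hlvl3 : ∀ x, lvl x < 3)
    {x : X} {y : Y} (hy : y ≠ c x) :
    Lo Q (Bm c lvl) (x,y) = ∑ x', if lvl x' < lvl x then (margX Q x' - Q (x', c x')) else 0 := by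
  rw [Lo]
  have hval : Bm c lvl (x,y) = lvl x := by simp [Bm, hy]
  rw [hval, Fintype.sum_prod_type]
  refine Finset.sum_congr rfl fun x' _ => ?_
  by_cases h : lvl x' < lvl x
  · rw [if_pos h, ← sum_nonchosen Q c x']
    refine Finset.sum_congr rfl fun y' _ => ?_
    by_cases hy' : y' = c x'
    · rw [if_neg, if_neg (by simp [hy'])]
      simp only [Bm, hy', if_pos rfl]
      exact asymm (hlvl3 x)
    · rw [if_pos (by simp only [Bm, if_neg hy']; exact h), if_pos hy']
  · rw [if_neg h]
    refine Finset.sum_eq_zero fun y' _ => ?_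
    by_cases hy' : y' = c x'
    · rw [if_neg]
      simp only [Bm, hy', if_pos rfl]
      exact asymm (hlvl3 x)
    · rw [if_neg (by simp only [Bm, if_neg hy']; exact h)]

lemma Bm_Wt (c : X → Y) (lvl : X → ℝ) (hlvl3 : ∀ x, lvl x < 3)
    {x : X} {y : Y} (hy : y ≠ c x) :
    Wt Q (Bm c lvl) (x,y) = ∑ x', if lvl x' = lvl x then (margX Q x' - Q (x', c x')) else 0 := by
  rw [Wt]
  have hval : Bm c lvl (x,y) = lvl x := by simp [Bm, hy]
  rw [hval, Fintype.sum_prod_type]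
  refine Finset.sum_congr rfl fun x' _ => ?_
  by_cases h : lvl x' = lvl x
  · rw [if_pos h, ← sum_nonchosen Q c x']
    refine Finset.sum_congr rfl fun y' _ => ?_
    by_cases hy' : y' = c x'
    · rw [if_neg, if_neg (by simp [hy'])]
      simp only [Bm, hy', if_pos rfl]
      exact (hlvl3 x).ne'
    · rw [if_pos (by simp only [Bm, if_neg hy']; exact h), if_pos hy']
  · rw [if_neg h]
    refine Finset.sum_eq_zero fun y' _ => ?_
    by_cases hy' : y' = c x'
    · rw [if_neg]
      simp only [Bm, hy', if_pos rfl]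
      exact (hlvl3 x).ne'
    · rw [if_neg (by simp only [Bm, if_neg hy']; exact h)]

end Bblock

section BmProb
variable {Q : X × Y → ℝ}

lemma g_nonneg (hQ0 : ∀ z, 0 ≤ Q z) (c : X → Y) (x' : X) :
    0 ≤ margX Q x' - Q (x', c x') := by
  rw [← sum_nonchosen]
  exact Finset.sum_nonneg fun y _ => by by_cases h : y ≠ c x' <;> simp [h, hQ0 (x', y)]

/-- Computation of the multiplicity probability for the block measure. -/
lemma Bm_prob (hQ0 : ∀ z, 0 ≤ Q z) (hY : 2 ≤ Fintype.card Y) (c : X → Y) (fx : X → ℝ)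
    (θ ε : ℝ) (hε0 : 0 < ε)
    (hG1 : (∑ x', if θ < fx x' then (margX Q x' - Q (x', c x')) else 0) ≤ ε)
    (hP3 : ∀ x, fx x < θ →
      ε < (∑ x', if θ < fx x' then (margX Q x' - Q (x', c x')) else 0)
        + ∑ x', if fx x' = θ then (margX Q x' - Q (x', c x')) else 0) :
    probXT Q (fun x τ =>
        1 < (predSet Q (Bm c fun x => if θ < fx x then 0 else if fx x = θ then 1 else 2) ε x τ).card)
      = ∑ x, margX Q x * (1 -
          (if θ < fx x then 1 else if fx x = θ then
            (if (∑ x', if fx x' = θ then (margX Q x' - Q (x', c x')) else 0) = 0 then 1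
              else clamp ((ε - ∑ x', if θ < fx x' then (margX Q x' - Q (x', c x')) else 0)
                / ∑ x', if fx x' = θ then (margX Q x' - Q (x', c x')) else 0)) else 0)) := by
  classical
  set gv : X → ℝ := fun x' => margX Q x' - Q (x', c x') with hgv
  set lvl : X → ℝ := fun x => if θ < fx x then 0 else if fx x = θ then 1 else 2 with hlvl
  set G1 : ℝ := ∑ x', if θ < fx x' then gv x' else 0 with hG1d
  set gθ : ℝ := ∑ x', if fx x' = θ then gv x' else 0 with hgθd
  have hgv0 : ∀ x', 0 ≤ gv x' := g_nonneg hQ0 c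
  have hG10 : 0 ≤ G1 := Finset.sum_nonneg fun x' _ => by
    by_cases h : θ < fx x' <;> simp [h, hgv0 x']
  have hgθ0 : 0 ≤ gθ := Finset.sum_nonneg fun x' _ => by
    by_cases h : fx x' = θ <;> simp [h, hgv0 x']
  have hlvl3 : ∀ x, lvl x < 3 := by
    intro x; simp only [hlvl]
    split_ifs <;> norm_num
  have hlvl0 : ∀ x, (0:ℝ) ≤ lvl x := by
    intro x; simp only [hlvl]
    split_ifs <;> norm_num
  have hntr : Nontrivial Y := Fintype.one_lt_card_iff_nontrivial.mp (by omega)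
  have hsecex : ∀ x : X, ∃ y : Y, y ≠ c x := fun x => exists_ne (c x)
  choose sec0 hsec0 using hsecex
  have htopB : ∀ x y, Bm c lvl (x,y) ≤ Bm c lvl (x, c x) := fun x y => Bm_top c lvl hlvl3 x y
  have hsecB : ∀ x y, y ≠ c x → Bm c lvl (x,y) ≤ Bm c lvl (x, sec0 x) :=
    fun x y hy => le_of_eq (Bm_sec c lvl hy (hsec0 x))
  rw [probXT_mult_eq hQ0 c sec0 hsec0 htopB hsecB]
  refine Finset.sum_congr rfl fun x _ => ?_
  -- compute TT at (x, sec0 x) by cases on the group of x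
  have hLo := Bm_Lo (Q := Q) c lvl hlvl3 (hsec0 x)
  have hWt := Bm_Wt (Q := Q) c lvl hlvl3 (hsec0 x)
  rcases lt_trichotomy θ (fx x) with hx | hx | hx
  · -- P₁ : lvl x = 0
    have hlx : lvl x = 0 := by simp only [hlvl]; rw [if_pos hx]
    have hLo0 : Lo Q (Bm c lvl) (x, sec0 x) = 0 := by
      rw [hLo]
      refine Finset.sum_eq_zero fun x' _ => ?_
      rw [if_neg]; rw [hlx]; exact not_lt.2 (hlvl0 x')
    have hWtG : Wt Q (Bm c lvl) (x, sec0 x) = G1 := by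
      rw [hWt, hG1d]
      refine Finset.sum_congr rfl fun x' _ => ?_
      refine if_congr ?_ rfl rfl
      rw [hlx]
      constructor
      · intro h
        by_contra hcon
        simp only [hlvl, if_neg hcon] at h
        split_ifs at h <;> norm_num at h
      · intro h; simp only [hlvl]; rw [if_pos h]
    have hTT : TT Q (Bm c lvl) ε (x, sec0 x) = 1 := by
      rcases hG10.lt_or_eq with hpos | hzero
      · rw [TT_closed_pos (by rw [hWtG]; exact hpos), hLo0, hWtG, sub_zero]
        exact clamp_of_one_le ((one_le_div hpos).2 hG1)
      · rw [TT_closed_zero (by rw [hWtG, ← hzero]), hLo0, if_pos hε0.le]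
    rw [hTT, if_pos hx]
  · -- P₂ : fx x = θ, lvl x = 1
    have hlx : lvl x = 1 := by
      simp only [hlvl]; rw [if_neg (by rw [← hx]; exact lt_irrefl _), if_pos hx.symm]
    have hLoG : Lo Q (Bm c lvl) (x, sec0 x) = G1 := by
      rw [hLo, hG1d]
      refine Finset.sum_congr rfl fun x' _ => ?_
      refine if_congr ?_ rfl rfl
      rw [hlx]
      constructor
      · intro h
        by_contra hcon
        simp only [hlvl, if_neg hcon] at h
        split_ifs at h <;> norm_num at h
      · intro h; simp only [hlvl]; rw [if_pos h]; norm_num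
    have hWtg : Wt Q (Bm c lvl) (x, sec0 x) = gθ := by
      rw [hWt, hgθd]
      refine Finset.sum_congr rfl fun x' _ => ?_
      refine if_congr ?_ rfl rfl
      rw [hlx]
      constructor
      · intro h
        simp only [hlvl] at h
        split_ifs at h with h1 h2
        · norm_num at h
        · exact h2
        · norm_num at h
      · intro h; simp only [hlvl]
        rw [if_neg (by rw [h]; exact lt_irrefl _), if_pos h]
    rw [if_neg (by rw [← hx]; exact lt_irrefl _), if_pos hx.symm]
    rcases hgθ0.lt_or_eq with hpos | hzero
    · rw [TT_closed_pos (by rw [hWtg]; exact hpos), hLoG, hWtg, if_neg hpos.ne']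
    · rw [TT_closed_zero (by rw [hWtg, ← hzero]), hLoG, if_pos hG1, if_pos hzero.symm]
  · -- P₃ : fx x < θ, lvl x = 2
    have hlx : lvl x = 2 := by
      simp only [hlvl]; rw [if_neg (asymm hx), if_neg hx.ne]
    have hLoG : Lo Q (Bm c lvl) (x, sec0 x) = G1 + gθ := by
      rw [hLo, hG1d, hgθd, ← Finset.sum_add_distrib]
      refine Finset.sum_congr rfl fun x' _ => ?_
      rw [hlx]
      rcases lt_trichotomy θ (fx x') with h1 | h1 | h1
      · rw [if_pos, if_pos h1, if_neg h1.ne', add_zero]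
        simp only [hlvl]; rw [if_pos h1]; norm_num
      · rw [if_pos, if_neg (by rw [← h1]; exact lt_irrefl _), if_pos h1.symm, zero_add]
        simp only [hlvl]
        rw [if_neg (by rw [← h1]; exact lt_irrefl _), if_pos h1.symm]; norm_num
      · rw [if_neg, if_neg (asymm h1), if_neg h1.ne, add_zero]
        simp only [hlvl]
        rw [if_neg (asymm h1), if_neg h1.ne]; exact lt_irrefl _
    have hεlt : ε < G1 + gθ := hP3 x hx
    have hTT : TT Q (Bm c lvl) ε (x, sec0 x) = 0 := by
      rcases (Wt_nonneg hQ0 (Bm c lvl) ((x, sec0 x) : X × Y)).lt_or_eq with hpos | hzero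
      · rw [TT_closed_pos hpos, hLoG]
        exact clamp_of_nonpos (div_nonpos_iff.mpr (Or.inr ⟨by linarith, (Wt_nonneg hQ0 _ _)⟩))
      · rw [TT_closed_zero hzero.symm, hLoG, if_neg (by linarith)]
    rw [hTT, if_neg (asymm hx), if_neg hx.ne]

end BmProb

end Aux


/-- If `A` is M-optimal then at each significance level multiple and empty predictions
cannot both have positive probability. -/
theorem stmt7 {X Y : Type*} [Fintype X] [Fintype Y] [DecidableEq Y] [Nonempty X]
    (hY : 2 ≤ Fintype.card Y) (Q : X × Y → ℝ) (hQ0 : ∀ z, 0 ≤ Q z)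
    (hQ1 : ∑ z : X × Y, Q z = 1) (hQX : ∀ x, 0 < margX Q x) (A : X × Y → ℝ) (hM : MOpt Q A) :
    ∀ ε ∈ Set.Ioo (0:ℝ) 1,
      probXT Q (fun x τ => 1 < (predSet Q A ε x τ).card) *
        probXT Q (fun x τ => (predSet Q A ε x τ).card = 0) = 0 := by
  classical
  intro ε hε
  obtain ⟨hε0, hε1⟩ := hε
  rcases eq_or_ne (probXT Q fun x τ => 1 < (predSet Q A ε x τ).card) 0 with h0 | hane
  · rw [h0, zero_mul]
  rcases eq_or_ne (probXT Q fun x τ => (predSet Q A ε x τ).card = 0) 0 with h0 | hbne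
  · rw [h0, mul_zero]
  exfalso
  have hYne : Nonempty Y := Fintype.card_pos_iff.mp (by omega)
  -- the choice function (argmax of Q(x,·))
  have hcex : ∀ x : X, ∃ tc : Y, ∀ y, Q (x,y) ≤ Q (x,tc) := by
    intro x
    obtain ⟨tc, -, htc⟩ := Finset.exists_max_image Finset.univ (fun y => Q (x,y))
      Finset.univ_nonempty
    exact ⟨tc, fun y => htc y (Finset.mem_univ y)⟩
  choose c hc using hcex
  -- top and second labels for A
  have htex : ∀ x : X, ∃ tp : Y, ∀ y, A (x,y) ≤ A (x,tp) := by
    intro x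
    obtain ⟨tp, -, htp⟩ := Finset.exists_max_image Finset.univ (fun y => A (x,y))
      Finset.univ_nonempty
    exact ⟨tp, fun y => htp y (Finset.mem_univ y)⟩
  choose tps htps using htex
  have hsex : ∀ x : X, ∃ sc : Y, sc ≠ tps x ∧ ∀ y, y ≠ tps x → A (x,y) ≤ A (x,sc) := by
    intro x
    have hne : (Finset.univ.erase (tps x)).Nonempty := by
      rw [← Finset.card_pos, Finset.card_erase_of_mem (Finset.mem_univ _), Finset.card_univ]
      omega
    obtain ⟨sc, hs, hmax⟩ := Finset.exists_max_image _ (fun y => A (x,y)) hne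
    exact ⟨sc, (Finset.mem_erase.1 hs).1,
      fun y hy => hmax y (Finset.mem_erase.2 ⟨hy, Finset.mem_univ y⟩)⟩
  choose scs hscs1 hscs2 using hsex
  have haeq := probXT_mult_eq (ε := ε) hQ0 tps scs hscs1 htps hscs2
  have hbeq := probXT_empty_eq (ε := ε) hQ0 tps htps
  -- basic bounds on s and t
  have hs0 : ∀ x, 0 ≤ TT Q A ε (x, scs x) := fun x => TT_nonneg Q A ε _
  have hs1 : ∀ x, TT Q A ε (x, scs x) ≤ 1 := fun x => TT_le_one hQ0 A ε _
  have ht0 : ∀ x, 0 ≤ TT Q A ε (x, tps x) := fun x => TT_nonneg Q A ε _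
  -- positivity of both probabilities
  have ha0 : 0 < probXT Q fun x τ => 1 < (predSet Q A ε x τ).card := by
    have hnn : 0 ≤ probXT Q fun x τ => 1 < (predSet Q A ε x τ).card := by
      rw [haeq]
      exact Finset.sum_nonneg fun x _ =>
        mul_nonneg (hQX x).le (by linarith [hs1 x])
    rcases hnn.lt_or_eq with h | h
    · exact h
    · exact absurd h.symm hane
  have hb0 : 0 < probXT Q fun x τ => (predSet Q A ε x τ).card = 0 := by
    have hnn : 0 ≤ probXT Q fun x τ => (predSet Q A ε x τ).card = 0 := by
      rw [hbeq]
      exact Finset.sum_nonneg fun x _ => mul_nonneg (hQX x).le (ht0 x)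
    rcases hnn.lt_or_eq with h | h
    · exact h
    · exact absurd h.symm hbne
  -- key budget inequality
  have hkey := keyA hQ0 hQ1 A hε0 hε1.le tps scs htps hscs2 c hc
  -- positivity of δ
  have hMq : ∀ x, 0 < Q (x, c x) := by
    intro x
    have : ∃ y, 0 < Q (x, y) := by
      by_contra hcon
      push_neg at hcon
      have : margX Q x ≤ 0 := Finset.sum_nonpos fun y _ => hcon y
      linarith [hQX x]
    obtain ⟨y0, hy0⟩ := this
    exact hy0.trans_le (hc x y0)
  have hδ0 : 0 < ∑ x, Q (x, c x) * TT Q A ε (x, tps x) := by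
    rw [hbeq] at hb0
    obtain ⟨x0, -, hx0⟩ := Finset.exists_lt_of_sum_lt (f := fun _ : X => (0:ℝ))
      (g := fun x => margX Q x * TT Q A ε (x, tps x)) (by simpa using hb0)
    have htx0 : 0 < TT Q A ε (x0, tps x0) := by
      rcases (ht0 x0).lt_or_eq with h | h
      · exact h
      · rw [← h, mul_zero] at hx0; exact absurd hx0 (lt_irrefl 0)
    calc (0:ℝ) < Q (x0, c x0) * TT Q A ε (x0, tps x0) := mul_pos (hMq x0) htx0
      _ ≤ _ := Finset.single_le_sum (f := fun x => Q (x, c x) * TT Q A ε (x, tps x))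
        (fun x _ => mul_nonneg (hQ0 _) (ht0 x)) (Finset.mem_univ x0)
  have hgs : ∑ x, (margX Q x - Q (x, c x)) * TT Q A ε (x, scs x)
      ≤ ε - ∑ x, Q (x, c x) * TT Q A ε (x, tps x) := by
    have hsplit : ∑ x, ((margX Q x - Q (x, c x)) * TT Q A ε (x, scs x)
        + Q (x, c x) * TT Q A ε (x, tps x))
        = ∑ x, (margX Q x - Q (x, c x)) * TT Q A ε (x, scs x)
          + ∑ x, Q (x, c x) * TT Q A ε (x, tps x) := Finset.sum_add_distrib
    linarith [hkey]
  -- predictability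
  have hMqle : ∀ x, Q (x, c x) ≤ margX Q x := fun x =>
    Finset.single_le_sum (fun y _ => hQ0 (x, y)) (Finset.mem_univ (c x))
  have hfxpos : ∀ x, 0 < Q (x, c x) / margX Q x := fun x => div_pos (hMq x) (hQX x)
  have hfx1 : ∀ x, Q (x, c x) / margX Q x ≤ 1 := fun x => (div_le_one (hQX x)).2 (hMqle x)
  have hgw : ∀ x, margX Q x - Q (x, c x)
      = margX Q x * (1 - Q (x, c x) / margX Q x) := by
    intro x
    rw [mul_sub, mul_one, mul_div_cancel₀ _ (hQX x).ne']
  -- case split on easy (ε covers all non-chosen mass) vs hard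
  rcases le_or_gt (∑ x', (margX Q x' - Q (x', c x'))) ε with heasy | hhard
  · -- EASY CASE: block measure with all non-chosen labels at the bottom
    have hG1 : (∑ x', if (-1:ℝ) < Q (x', c x') / margX Q x' then
        (margX Q x' - Q (x', c x')) else 0) ≤ ε := by
      calc (∑ x', if (-1:ℝ) < Q (x', c x') / margX Q x' then
          (margX Q x' - Q (x', c x')) else 0)
          = ∑ x', (margX Q x' - Q (x', c x')) := by
            refine Finset.sum_congr rfl fun x' _ => ?_
            rw [if_pos (by linarith [hfxpos x'])]
        _ ≤ ε := heasy
    have hP3 : ∀ x, Q (x, c x) / margX Q x < (-1:ℝ) →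
        ε < (∑ x', if (-1:ℝ) < Q (x', c x') / margX Q x' then
            (margX Q x' - Q (x', c x')) else 0)
          + ∑ x', if Q (x', c x') / margX Q x' = (-1:ℝ) then
            (margX Q x' - Q (x', c x')) else 0 := by
      intro x hx
      exact absurd hx (by push_neg; linarith [hfxpos x])
    have haB := Bm_prob hQ0 hY c (fun x => Q (x, c x) / margX Q x) (-1) ε hε0 hG1 hP3
    have haB0 : probXT Q (fun x τ =>
        1 < (predSet Q (Bm c fun x => if (-1:ℝ) < Q (x, c x) / margX Q x then 0
          else if Q (x, c x) / margX Q x = (-1:ℝ) then 1 else 2) ε x τ).card) = 0 := by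
      rw [haB]
      refine Finset.sum_eq_zero fun x _ => ?_
      rw [if_pos (by linarith [hfxpos x])]
      ring
    rcases hM (Bm c fun x => if (-1:ℝ) < Q (x, c x) / margX Q x then 0
        else if Q (x, c x) / margX Q x = (-1:ℝ) then 1 else 2) ε ⟨hε0, hε1⟩ with hlt | ⟨heqq, -⟩
    · rw [haB0] at hlt; linarith
    · rw [haB0] at heqq; exact hane heqq
  · -- HARD CASE: ε < total non-chosen mass
    have hgv0 : ∀ x', 0 ≤ margX Q x' - Q (x', c x') := fun x' => by linarith [hMqle x']
    -- split lemma, for any threshold value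
    have hsplit : ∀ t : ℝ, (∑ x', if t ≤ Q (x', c x') / margX Q x' then (margX Q x' - Q (x', c x')) else 0)
        = (∑ x', if t < Q (x', c x') / margX Q x' then (margX Q x' - Q (x', c x')) else 0) + (∑ x', if Q (x', c x') / margX Q x' = t then (margX Q x' - Q (x', c x')) else 0) := by
      intro t
      rw [← Finset.sum_add_distrib]
      refine Finset.sum_congr rfl fun x' _ => ?_
      rcases lt_trichotomy t (Q (x', c x') / margX Q x') with h1 | h1 | h1
      · rw [if_pos h1.le, if_pos h1, if_neg h1.ne', add_zero]
      · rw [if_pos h1.le, if_neg (by rw [h1]; exact lt_irrefl _), if_pos h1.symm, zero_add]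
      · rw [if_neg (not_le.2 h1), if_neg (asymm h1), if_neg h1.ne, add_zero]
    -- existence of the critical threshold θ
    have hθex : ∃ θ : ℝ, θ < 1 ∧ ((∑ x', if θ < Q (x', c x') / margX Q x' then (margX Q x' - Q (x', c x')) else 0) ≤ ε) ∧ (ε < (∑ x', if θ < Q (x', c x') / margX Q x' then (margX Q x' - Q (x', c x')) else 0) + (∑ x', if Q (x', c x') / margX Q x' = θ then (margX Q x' - Q (x', c x')) else 0)) := by
      have hSne : ((Finset.univ.image (fun x => Q (x, c x) / margX Q x)).filter (fun v => ε < ∑ x', if v ≤ Q (x', c x') / margX Q x' then (margX Q x' - Q (x', c x')) else 0)).Nonempty := by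
        obtain ⟨xm, -, hxm⟩ := Finset.exists_min_image Finset.univ
          (fun x => Q (x, c x) / margX Q x) Finset.univ_nonempty
        refine ⟨Q (xm, c xm) / margX Q xm, Finset.mem_filter.2
          ⟨Finset.mem_image_of_mem _ (Finset.mem_univ xm), ?_⟩⟩
        have hall : (∑ x', if Q (xm, c xm) / margX Q xm ≤ Q (x', c x') / margX Q x' then (margX Q x' - Q (x', c x')) else 0)
            = ∑ x', (margX Q x' - Q (x', c x')) :=
          Finset.sum_congr rfl fun x' _ => if_pos (hxm x' (Finset.mem_univ x'))
        rw [hall]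
        exact hhard
      have hθsum : ε < ∑ x', if (((Finset.univ.image (fun x => Q (x, c x) / margX Q x)).filter (fun v => ε < ∑ x', if v ≤ Q (x', c x') / margX Q x' then (margX Q x' - Q (x', c x')) else 0)).max' hSne) ≤ Q (x', c x') / margX Q x' then (margX Q x' - Q (x', c x')) else 0 := by
        have hmem := Finset.max'_mem ((Finset.univ.image (fun x => Q (x, c x) / margX Q x)).filter (fun v => ε < ∑ x', if v ≤ Q (x', c x') / margX Q x' then (margX Q x' - Q (x', c x')) else 0)) hSne
        rw [Finset.mem_filter] at hmem
        exact hmem.2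
      refine ⟨((Finset.univ.image (fun x => Q (x, c x) / margX Q x)).filter (fun v => ε < ∑ x', if v ≤ Q (x', c x') / margX Q x' then (margX Q x' - Q (x', c x')) else 0)).max' hSne, ?_, ?_, ?_⟩
      · -- θ < 1
        by_contra hcon
        push_neg at hcon
        have hzero : (∑ x', if (((Finset.univ.image (fun x => Q (x, c x) / margX Q x)).filter (fun v => ε < ∑ x', if v ≤ Q (x', c x') / margX Q x' then (margX Q x' - Q (x', c x')) else 0)).max' hSne) ≤ Q (x', c x') / margX Q x' then (margX Q x' - Q (x', c x')) else 0) = 0 := by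
          refine Finset.sum_eq_zero fun x' _ => ?_
          by_cases h : (((Finset.univ.image (fun x => Q (x, c x) / margX Q x)).filter (fun v => ε < ∑ x', if v ≤ Q (x', c x') / margX Q x' then (margX Q x' - Q (x', c x')) else 0)).max' hSne) ≤ Q (x', c x') / margX Q x'
          · rw [if_pos h]
            have h1 : Q (x', c x') / margX Q x' = 1 := le_antisymm (hfx1 x') (hcon.trans h)
            rw [hgw x', h1]
            ring
          · rw [if_neg h]
        rw [hzero] at hθsum
        linarith
      · -- G1 ≤ ε
        by_cases hP1 : ∃ x', (((Finset.univ.image (fun x => Q (x, c x) / margX Q x)).filter (fun v => ε < ∑ x', if v ≤ Q (x', c x') / margX Q x' then (margX Q x' - Q (x', c x')) else 0)).max' hSne) < Q (x', c x') / margX Q x'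
        · obtain ⟨xw, hxw⟩ := hP1
          have hTne : ((Finset.univ.image (fun x => Q (x, c x) / margX Q x)).filter (fun v => (((Finset.univ.image (fun x => Q (x, c x) / margX Q x)).filter (fun v => ε < ∑ x', if v ≤ Q (x', c x') / margX Q x' then (margX Q x' - Q (x', c x')) else 0)).max' hSne) < v)).Nonempty :=
            ⟨Q (xw, c xw) / margX Q xw, Finset.mem_filter.2
              ⟨Finset.mem_image_of_mem _ (Finset.mem_univ xw), hxw⟩⟩
          have hv'mem := Finset.min'_mem ((Finset.univ.image (fun x => Q (x, c x) / margX Q x)).filter (fun v => (((Finset.univ.image (fun x => Q (x, c x) / margX Q x)).filter (fun v => ε < ∑ x', if v ≤ Q (x', c x') / margX Q x' then (margX Q x' - Q (x', c x')) else 0)).max' hSne) < v)) hTne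
          rw [Finset.mem_filter] at hv'mem
          obtain ⟨hv'im, hv'gt⟩ := hv'mem
          have hrw : (∑ x', if (((Finset.univ.image (fun x => Q (x, c x) / margX Q x)).filter (fun v => ε < ∑ x', if v ≤ Q (x', c x') / margX Q x' then (margX Q x' - Q (x', c x')) else 0)).max' hSne) < Q (x', c x') / margX Q x' then (margX Q x' - Q (x', c x')) else 0)
              = ∑ x', if (((Finset.univ.image (fun x => Q (x, c x) / margX Q x)).filter (fun v => (((Finset.univ.image (fun x => Q (x, c x) / margX Q x)).filter (fun v => ε < ∑ x', if v ≤ Q (x', c x') / margX Q x' then (margX Q x' - Q (x', c x')) else 0)).max' hSne) < v)).min' hTne) ≤ Q (x', c x') / margX Q x' then (margX Q x' - Q (x', c x')) else 0 := by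
            refine Finset.sum_congr rfl fun x' _ => ?_
            refine if_congr ⟨fun h => ?_, fun h => hv'gt.trans_le h⟩ rfl rfl
            exact Finset.min'_le ((Finset.univ.image (fun x => Q (x, c x) / margX Q x)).filter (fun v => (((Finset.univ.image (fun x => Q (x, c x) / margX Q x)).filter (fun v => ε < ∑ x', if v ≤ Q (x', c x') / margX Q x' then (margX Q x' - Q (x', c x')) else 0)).max' hSne) < v)) _ (Finset.mem_filter.2
              ⟨Finset.mem_image_of_mem _ (Finset.mem_univ x'), h⟩)
          rw [hrw]
          by_contra hcon
          push_neg at hcon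
          have hv'S : (((Finset.univ.image (fun x => Q (x, c x) / margX Q x)).filter (fun v => (((Finset.univ.image (fun x => Q (x, c x) / margX Q x)).filter (fun v => ε < ∑ x', if v ≤ Q (x', c x') / margX Q x' then (margX Q x' - Q (x', c x')) else 0)).max' hSne) < v)).min' hTne) ≤ ((Finset.univ.image (fun x => Q (x, c x) / margX Q x)).filter (fun v => ε < ∑ x', if v ≤ Q (x', c x') / margX Q x' then (margX Q x' - Q (x', c x')) else 0)).max' hSne :=
            Finset.le_max' ((Finset.univ.image (fun x => Q (x, c x) / margX Q x)).filter (fun v => ε < ∑ x', if v ≤ Q (x', c x') / margX Q x' then (margX Q x' - Q (x', c x')) else 0)) _ (Finset.mem_filter.2 ⟨hv'im, hcon⟩)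
          linarith [hv'gt]
        · push_neg at hP1
          have hzero : (∑ x', if (((Finset.univ.image (fun x => Q (x, c x) / margX Q x)).filter (fun v => ε < ∑ x', if v ≤ Q (x', c x') / margX Q x' then (margX Q x' - Q (x', c x')) else 0)).max' hSne) < Q (x', c x') / margX Q x' then (margX Q x' - Q (x', c x')) else 0) = 0 :=
            Finset.sum_eq_zero fun x' _ => if_neg (not_lt.2 (hP1 x'))
          rw [hzero]
          exact hε0.le
      · -- ε < G1 + gθ
        rw [← hsplit]
        exact hθsum
    obtain ⟨θ, hθ1, hG1le, hεlt⟩ := hθex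
    have hgθpos : 0 < (∑ x', if Q (x', c x') / margX Q x' = θ then (margX Q x' - Q (x', c x')) else 0) := by linarith
    have hθlt1 : (0:ℝ) < 1 - θ := by linarith
    -- the dual multiplier
    have hlam0 : 0 < (1 - θ)⁻¹ := inv_pos.2 hθlt1
    have hwlam : ∀ x, Q (x, c x) / margX Q x = θ →
        margX Q x = (1 - θ)⁻¹ * (margX Q x - Q (x, c x)) := by
      intro x hx
      rw [hgw x, hx]
      field_simp
    have hP1lam : ∀ x, θ < Q (x, c x) / margX Q x →
        (1 - θ)⁻¹ * (margX Q x - Q (x, c x)) ≤ margX Q x := by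
      intro x hx
      rw [hgw x]
      have h2 : margX Q x * (1 - Q (x, c x) / margX Q x) ≤ margX Q x * (1 - θ) :=
        mul_le_mul_of_nonneg_left (by linarith) (hQX x).le
      calc (1 - θ)⁻¹ * (margX Q x * (1 - Q (x, c x) / margX Q x))
          ≤ (1 - θ)⁻¹ * (margX Q x * (1 - θ)) :=
            mul_le_mul_of_nonneg_left h2 hlam0.le
        _ = margX Q x := by field_simp
    have hP3lam : ∀ x, Q (x, c x) / margX Q x < θ →
        margX Q x ≤ (1 - θ)⁻¹ * (margX Q x - Q (x, c x)) := by
      intro x hx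
      rw [hgw x]
      have h2 : margX Q x * (1 - θ) ≤ margX Q x * (1 - Q (x, c x) / margX Q x) :=
        mul_le_mul_of_nonneg_left (by linarith) (hQX x).le
      calc margX Q x = (1 - θ)⁻¹ * (margX Q x * (1 - θ)) := by field_simp
        _ ≤ (1 - θ)⁻¹ * (margX Q x * (1 - Q (x, c x) / margX Q x)) :=
            mul_le_mul_of_nonneg_left h2 hlam0.le
    -- the block measure computation
    have hP3' : ∀ x, Q (x, c x) / margX Q x < θ → ε < (∑ x', if θ < Q (x', c x') / margX Q x' then (margX Q x' - Q (x', c x')) else 0) + (∑ x', if Q (x', c x') / margX Q x' = θ then (margX Q x' - Q (x', c x')) else 0) := fun x _ => hεlt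
    have haB := Bm_prob hQ0 hY c (fun x => Q (x, c x) / margX Q x) θ ε hε0 hG1le hP3'
    have hσθ : (if (∑ x', if Q (x', c x') / margX Q x' = θ then (margX Q x' - Q (x', c x')) else 0) = 0 then (1:ℝ)
        else clamp ((ε - (∑ x', if θ < Q (x', c x') / margX Q x' then (margX Q x' - Q (x', c x')) else 0)) / (∑ x', if Q (x', c x') / margX Q x' = θ then (margX Q x' - Q (x', c x')) else 0))) = (ε - (∑ x', if θ < Q (x', c x') / margX Q x' then (margX Q x' - Q (x', c x')) else 0)) / (∑ x', if Q (x', c x') / margX Q x' = θ then (margX Q x' - Q (x', c x')) else 0) := by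
      rw [if_neg hgθpos.ne', clamp,
        min_eq_right ((div_le_one hgθpos).2 (by linarith)),
        max_eq_left (div_nonneg (by linarith) hgθpos.le)]
    rw [hσθ] at haB
    -- apply M-optimality
    have hle : (probXT Q fun x τ => 1 < (predSet Q A ε x τ).card)
        ≤ probXT Q (fun x τ => 1 < (predSet Q (Bm c fun x =>
            if θ < Q (x, c x) / margX Q x then 0 else if Q (x, c x) / margX Q x = θ then 1 else 2) ε x τ).card) := by
      rcases hM (Bm c fun x => if θ < Q (x, c x) / margX Q x then 0
          else if Q (x, c x) / margX Q x = θ then 1 else 2) ε ⟨hε0, hε1⟩ with hlt | ⟨heqq, -⟩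
      · exact hlt.le
      · exact le_of_eq heqq
    rw [haeq, haB] at hle
    -- final arithmetic: LP weak duality
    have e1 : ∑ x, margX Q x * (1 - TT Q A ε (x, scs x))
        = (∑ x, margX Q x) - ∑ x, margX Q x * TT Q A ε (x, scs x) := by
      rw [← Finset.sum_sub_distrib]
      exact Finset.sum_congr rfl fun x _ => by ring
    have e2 : ∑ x, margX Q x * (1 - (if θ < Q (x, c x) / margX Q x then 1 else if Q (x, c x) / margX Q x = θ then
          (ε - (∑ x', if θ < Q (x', c x') / margX Q x' then (margX Q x' - Q (x', c x')) else 0)) / (∑ x', if Q (x', c x') / margX Q x' = θ then (margX Q x' - Q (x', c x')) else 0) else 0))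
        = (∑ x, margX Q x) - ∑ x, margX Q x * (if θ < Q (x, c x) / margX Q x then 1 else if Q (x, c x) / margX Q x = θ then
          (ε - (∑ x', if θ < Q (x', c x') / margX Q x' then (margX Q x' - Q (x', c x')) else 0)) / (∑ x', if Q (x', c x') / margX Q x' = θ then (margX Q x' - Q (x', c x')) else 0) else 0) := by
      rw [← Finset.sum_sub_distrib]
      exact Finset.sum_congr rfl fun x _ => by ring
    rw [e1, e2] at hle
    have hSig : ∑ x, margX Q x * (if θ < Q (x, c x) / margX Q x then 1 else if Q (x, c x) / margX Q x = θ then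
        (ε - (∑ x', if θ < Q (x', c x') / margX Q x' then (margX Q x' - Q (x', c x')) else 0)) / (∑ x', if Q (x', c x') / margX Q x' = θ then (margX Q x' - Q (x', c x')) else 0) else 0) ≤ ∑ x, margX Q x * TT Q A ε (x, scs x) := by linarith
    -- lower expression: value at the block measure
    have hlower : ∑ x, margX Q x * (if θ < Q (x, c x) / margX Q x then 1 else if Q (x, c x) / margX Q x = θ then
        (ε - (∑ x', if θ < Q (x', c x') / margX Q x' then (margX Q x' - Q (x', c x')) else 0)) / (∑ x', if Q (x', c x') / margX Q x' = θ then (margX Q x' - Q (x', c x')) else 0) else 0)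
        = (∑ x, if θ < Q (x, c x) / margX Q x then margX Q x else 0) + ((1:ℝ) - θ)⁻¹ * ε - (1 - θ)⁻¹ * (∑ x', if θ < Q (x', c x') / margX Q x' then (margX Q x' - Q (x', c x')) else 0) := by
      have step1 : ∑ x, margX Q x * (if θ < Q (x, c x) / margX Q x then 1 else if Q (x, c x) / margX Q x = θ then
          (ε - (∑ x', if θ < Q (x', c x') / margX Q x' then (margX Q x' - Q (x', c x')) else 0)) / (∑ x', if Q (x', c x') / margX Q x' = θ then (margX Q x' - Q (x', c x')) else 0) else 0)
          = ∑ x, ((if θ < Q (x, c x) / margX Q x then margX Q x else 0)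
            + (if Q (x, c x) / margX Q x = θ then margX Q x else 0) * ((ε - (∑ x', if θ < Q (x', c x') / margX Q x' then (margX Q x' - Q (x', c x')) else 0)) / (∑ x', if Q (x', c x') / margX Q x' = θ then (margX Q x' - Q (x', c x')) else 0))) := by
        refine Finset.sum_congr rfl fun x _ => ?_
        rcases lt_trichotomy θ (Q (x, c x) / margX Q x) with h1 | h1 | h1
        · rw [if_pos h1, if_pos h1, if_neg h1.ne', mul_one, zero_mul, add_zero]
        · rw [if_neg (by rw [h1]; exact lt_irrefl _), if_pos h1.symm,
            if_neg (by rw [h1]; exact lt_irrefl _), if_pos h1.symm, zero_add]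
        · rw [if_neg (asymm h1), if_neg h1.ne, if_neg (asymm h1), if_neg h1.ne,
            mul_zero, zero_mul, add_zero]
      have step2 : (∑ x, if Q (x, c x) / margX Q x = θ then margX Q x else 0)
          = (1 - θ)⁻¹ * (∑ x', if Q (x', c x') / margX Q x' = θ then (margX Q x' - Q (x', c x')) else 0) := by
        rw [Finset.mul_sum]
        refine Finset.sum_congr rfl fun x' _ => ?_
        by_cases h : Q (x', c x') / margX Q x' = θ
        · rw [if_pos h, if_pos h]
          exact hwlam x' h
        · rw [if_neg h, if_neg h, mul_zero]
      have step3 : ((1 - θ)⁻¹ * (∑ x', if Q (x', c x') / margX Q x' = θ then (margX Q x' - Q (x', c x')) else 0)) * ((ε - (∑ x', if θ < Q (x', c x') / margX Q x' then (margX Q x' - Q (x', c x')) else 0)) / (∑ x', if Q (x', c x') / margX Q x' = θ then (margX Q x' - Q (x', c x')) else 0))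
          = (1 - θ)⁻¹ * ε - (1 - θ)⁻¹ * (∑ x', if θ < Q (x', c x') / margX Q x' then (margX Q x' - Q (x', c x')) else 0) := by
        field_simp
      rw [step1, Finset.sum_add_distrib, ← Finset.sum_mul, step2, step3]
      ring
    -- upper bound on the value at A
    have hupper : ∑ x, margX Q x * TT Q A ε (x, scs x)
        ≤ (∑ x, if θ < Q (x, c x) / margX Q x then margX Q x else 0) - (1 - θ)⁻¹ * (∑ x', if θ < Q (x', c x') / margX Q x' then (margX Q x' - Q (x', c x')) else 0) + ((1 - θ)⁻¹ * ε - (1 - θ)⁻¹ * (∑ x, Q (x, c x) * TT Q A ε (x, tps x))) := by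
      have step1 : ∑ x, margX Q x * TT Q A ε (x, scs x)
          = ∑ x, ((margX Q x - (1 - θ)⁻¹ * (margX Q x - Q (x, c x))) * TT Q A ε (x, scs x))
            + (1 - θ)⁻¹ * ∑ x, (margX Q x - Q (x, c x)) * TT Q A ε (x, scs x) := by
        rw [Finset.mul_sum, ← Finset.sum_add_distrib]
        exact Finset.sum_congr rfl fun x _ => by ring
      have step2 : ∑ x, ((margX Q x - (1 - θ)⁻¹ * (margX Q x - Q (x, c x))) * TT Q A ε (x, scs x))
          ≤ ∑ x, (if θ < Q (x, c x) / margX Q x then (margX Q x - (1 - θ)⁻¹ * (margX Q x - Q (x, c x))) else 0) := by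
        refine Finset.sum_le_sum fun x _ => ?_
        rcases lt_trichotomy θ (Q (x, c x) / margX Q x) with h1 | h1 | h1
        · rw [if_pos h1]
          exact mul_le_of_le_one_right (by linarith [hP1lam x h1]) (hs1 x)
        · rw [if_neg (by rw [h1]; exact lt_irrefl _)]
          have hz : margX Q x - (1 - θ)⁻¹ * (margX Q x - Q (x, c x)) = 0 := by
            rw [← hwlam x h1.symm]; ring
          rw [hz, zero_mul]
        · rw [if_neg (asymm h1)]
          have hz : margX Q x - (1 - θ)⁻¹ * (margX Q x - Q (x, c x)) ≤ 0 := by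
            linarith [hP3lam x h1]
          calc (margX Q x - (1 - θ)⁻¹ * (margX Q x - Q (x, c x))) * TT Q A ε (x, scs x)
              ≤ 0 * TT Q A ε (x, scs x) := mul_le_mul_of_nonneg_right hz (hs0 x)
            _ = 0 := zero_mul _
      have step3 : ∑ x, (if θ < Q (x, c x) / margX Q x then (margX Q x - (1 - θ)⁻¹ * (margX Q x - Q (x, c x))) else 0)
          = (∑ x, if θ < Q (x, c x) / margX Q x then margX Q x else 0) - (1 - θ)⁻¹ * (∑ x', if θ < Q (x', c x') / margX Q x' then (margX Q x' - Q (x', c x')) else 0) := by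
        rw [Finset.mul_sum, ← Finset.sum_sub_distrib]
        refine Finset.sum_congr rfl fun x _ => ?_
        by_cases h : θ < Q (x, c x) / margX Q x
        · rw [if_pos h, if_pos h, if_pos h]
        · rw [if_neg h, if_neg h, if_neg h, mul_zero, sub_zero]
      have step4 : (1 - θ)⁻¹ * ∑ x, (margX Q x - Q (x, c x)) * TT Q A ε (x, scs x)
          ≤ (1 - θ)⁻¹ * (ε - (∑ x, Q (x, c x) * TT Q A ε (x, tps x))) :=
        mul_le_mul_of_nonneg_left hgs hlam0.le
      have step5 : (1 - θ)⁻¹ * (ε - (∑ x, Q (x, c x) * TT Q A ε (x, tps x)))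
          = (1 - θ)⁻¹ * ε - (1 - θ)⁻¹ * (∑ x, Q (x, c x) * TT Q A ε (x, tps x)) := by ring
      linarith [step1, step2.trans_eq step3, step4.trans_eq step5]
    have hfinal : 0 < (1 - θ)⁻¹ * (∑ x, Q (x, c x) * TT Q A ε (x, tps x)) := mul_pos hlam0 hδ0
    linarith [hSig, hlower, hupper, hfinal]
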